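/- arXiv:2005.12492 — 4 statements merged into one kernel-verified Lean document; each statement's English description precedes it below -/
import Mathlib

section
/- Let r_+ > 0 and let φ : [r_+, ∞) → ℂ be continuously differentiable. Then for any r' > r_+, ∫_{r_+}^{r'} |φ(r)|^2 dr ≤ C ( ∫_{r_+}^{r'} μ(r)^2 r^2 |φ'(r)|^2 dr + (r' - r_+) |φ(r')|^2 ) for some universal constant C, where μ(r) = (r^2 - 2Mr + a^2)/(r^2 + a^2) and r_+ is the larger root of r^2 - 2Mr + a^2 (with 0 ≤ |a| < M). (It suffices to prove the inequality with C an absolute constant depending only on M, a.) -/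
open MeasureTheory

noncomputable def rplus (M a : ℝ) : ℝ := M + Real.sqrt (M^2 - a^2)

noncomputable def muKerr (M a r : ℝ) : ℝ := (r^2 - 2*M*r + a^2) / (r^2 + a^2)


private lemma aux_pt (u v u' v' t : ℝ) :
    (1/2)*(u^2+v^2) - 2*t^2*(u'^2+v'^2) ≤ (u^2+v^2) + t*(2*u*u'+2*v*v') := by
  nlinarith [sq_nonneg (u+2*t*u'), sq_nonneg (v+2*t*v')]

set_option maxHeartbeats 1000000 in
/-- Simple Hardy inequality with boundary term: for `φ` C¹ on `[r_+, ∞)` and any `r' > r_+`,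
`∫_{r_+}^{r'} |φ|² dr ≤ C (∫_{r_+}^{r'} μ² r² |φ'|² dr + (r' - r_+)|φ(r')|²)`
for a constant `C` depending only on `M, a`. -/
theorem hardy_trivial (M a : ℝ) (hM : 0 < M) (ha : |a| < M) :
    ∃ C > 0, ∀ (φ φ' : ℝ → ℂ),
      (∀ r, rplus M a ≤ r → HasDerivAt φ (φ' r) r) →
      ContinuousOn φ' (Set.Ici (rplus M a)) →
      ∀ r', rplus M a < r' →
        (∫ r in (rplus M a)..r', ‖φ r‖^2)
          ≤ C * ((∫ r in (rplus M a)..r', (muKerr M a r)^2 * r^2 * ‖φ' r‖^2)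
              + (r' - rplus M a) * ‖φ r'‖^2) := by
  have ha2 : a^2 < M^2 := by nlinarith [abs_nonneg a, sq_abs a]
  set s : ℝ := Real.sqrt (M^2 - a^2) with hsdef
  have hs0 : 0 < s := Real.sqrt_pos.mpr (by linarith)
  have hs2 : s^2 = M^2 - a^2 := Real.sq_sqrt (by linarith)
  have hsM : s ≤ M := by nlinarith [sq_nonneg a]
  have hRdef : rplus M a = M + s := rfl
  set R : ℝ := rplus M a with hRset
  have hR0 : 0 < R := by rw [hRdef]; linarith
  set K : ℝ := 9*M^2/s^2 with hK
  have hK0 : 0 < K := by positivity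
  refine ⟨4*K + 2, by positivity, ?_⟩
  intro φ φ' hderiv hcont r' hr'
  have hRr' : R ≤ r' := hr'.le
  -- pointwise key inequality
  have key : ∀ r, R ≤ r → (r - R)^2 ≤ K * ((muKerr M a r)^2 * r^2) := by
    intro r hr
    have hrR : R ≤ r := hr
    rw [hRdef] at hrR
    have hr0 : 0 < r := lt_of_lt_of_le hR0 hr
    have hD : 0 < r^2 + a^2 := by positivity
    have hDel : 0 ≤ r^2 - 2*M*r + a^2 := by nlinarith [hs2]
    have hmain : s*(r-R)*(r^2+a^2) ≤ 3*M*((r^2 - 2*M*r + a^2)*r) := by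
      rw [hRdef]
      nlinarith [hs2, mul_nonneg (sub_nonneg.mpr hrR) (sub_nonneg.mpr hrR),
        mul_nonneg (mul_nonneg (sub_nonneg.mpr hrR) (sub_nonneg.mpr hrR)) (sub_nonneg.mpr hrR),
        mul_nonneg (sub_nonneg.mpr hrR) hs0.le,
        mul_nonneg (mul_nonneg (sub_nonneg.mpr hrR) hs0.le) hs0.le,
        mul_nonneg (mul_nonneg (sub_nonneg.mpr hrR) (sub_nonneg.mpr hsM)) hs0.le,
        mul_nonneg (mul_nonneg (sub_nonneg.mpr hrR) (sub_nonneg.mpr hrR)) hs0.le,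
        mul_nonneg (mul_nonneg (sub_nonneg.mpr hrR) (sub_nonneg.mpr hsM)) hM.le,
        mul_nonneg (mul_nonneg (sub_nonneg.mpr hrR) (sub_nonneg.mpr hrR)) hM.le,
        mul_pos hM hr0, mul_pos hs0 hr0]
    have hμr : 0 ≤ muKerr M a r * r :=
      mul_nonneg (div_nonneg hDel hD.le) hr0.le
    have h3 : (r - R) * s ≤ 3*M*(muKerr M a r * r) := by
      have he : 3*M*(muKerr M a r * r) = 3*M*((r^2 - 2*M*r + a^2)*r)/(r^2+a^2) := by
        unfold muKerr; field_simp
      rw [he, le_div_iff₀ hD]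
      nlinarith [hmain]
    have h4 : (r - R) ≤ 3*M*(muKerr M a r * r)/s := by
      rw [le_div_iff₀ hs0]; linarith
    have h5 : (r - R)^2 ≤ (3*M*(muKerr M a r * r)/s)^2 :=
      pow_le_pow_left₀ (sub_nonneg.mpr hr) h4 2
    have h6 : (3*M*(muKerr M a r * r)/s)^2 = K * ((muKerr M a r)^2 * r^2) := by
      rw [hK]; field_simp; ring
    linarith [h5, h6.le, h6.ge]
  -- continuity facts
  have hφcont : ContinuousOn φ (Set.Icc R r') := fun r hr =>
    ((hderiv r hr.1).continuousAt).continuousWithinAt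
  have hφ'cont : ContinuousOn φ' (Set.Icc R r') := hcont.mono Set.Icc_subset_Ici_self
  have hnormsq : ∀ z : ℂ, z.re^2 + z.im^2 = ‖z‖^2 := by
    intro z
    rw [Complex.sq_norm, Complex.normSq_apply]; ring
  set g : ℝ → ℝ := fun r => (r - R) * ((φ r).re^2 + (φ r).im^2) with hgdef
  set g' : ℝ → ℝ := fun r => ((φ r).re^2 + (φ r).im^2)
      + (r - R) * (2*(φ r).re*(φ' r).re + 2*(φ r).im*(φ' r).im) with hg'def
  have hg : ∀ r ∈ Set.uIcc R r', HasDerivAt g (g' r) r := by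
    intro r hr
    rw [Set.uIcc_of_le hRr'] at hr
    have hd := hderiv r hr.1
    have hre : HasDerivAt (fun t => (φ t).re) ((φ' r).re) r :=
      (Complex.reCLM.hasFDerivAt.comp_hasDerivAt r hd)
    have him : HasDerivAt (fun t => (φ t).im) ((φ' r).im) r :=
      (Complex.imCLM.hasFDerivAt.comp_hasDerivAt r hd)
    have h1 : HasDerivAt (fun t : ℝ => t - R) 1 r := (hasDerivAt_id r).sub_const R
    have h2 : HasDerivAt (fun t => (φ t).re^2 + (φ t).im^2)
        (2*(φ r).re*(φ' r).re + 2*(φ r).im*(φ' r).im) r := by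
      have := (hre.pow 2).add (him.pow 2)
      convert this using 1
      · rfl
      · rfl
      · rfl
      · simp
    have := h1.mul h2
    convert this using 1
    · rfl
    · rfl
    · rfl
    · simp [hg'def]
  have hφre : ContinuousOn (fun r => (φ r).re) (Set.Icc R r') :=
    Complex.continuous_re.comp_continuousOn hφcont
  have hφim : ContinuousOn (fun r => (φ r).im) (Set.Icc R r') :=
    Complex.continuous_im.comp_continuousOn hφcont
  have hφ're : ContinuousOn (fun r => (φ' r).re) (Set.Icc R r') :=
    Complex.continuous_re.comp_continuousOn hφ'cont
  have hφ'im : ContinuousOn (fun r => (φ' r).im) (Set.Icc R r') :=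
    Complex.continuous_im.comp_continuousOn hφ'cont
  have hg'cont : ContinuousOn g' (Set.Icc R r') := by
    apply ContinuousOn.add
    · exact (hφre.pow 2).add (hφim.pow 2)
    · exact (continuousOn_id.sub continuousOn_const).mul
        ((((continuousOn_const.mul hφre).mul hφ're)).add
          (((continuousOn_const.mul hφim).mul hφ'im)))
  have hg'int : IntervalIntegrable g' volume R r' :=
    hg'cont.intervalIntegrable_of_Icc hRr'
  have hFTC : ∫ r in R..r', g' r = g r' - g R :=
    intervalIntegral.integral_eq_sub_of_hasDerivAt hg hg'int
  have hgR : g R = 0 := by simp [hgdef]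
  have hgr' : g r' = (r' - R) * ‖φ r'‖^2 := by
    simp only [hgdef, hnormsq (φ r')]
  -- pointwise lower bound for g'
  have hpt : ∀ r ∈ Set.Icc R r',
      (1/2)*‖φ r‖^2 - 2*(r-R)^2*‖φ' r‖^2 ≤ g' r := by
    intro r hr
    have e1 := hnormsq (φ r)
    have e2 := hnormsq (φ' r)
    simp only [hg'def, ← e1, ← e2]
    exact aux_pt _ _ _ _ _
  have hfcont : ContinuousOn (fun r => ‖φ r‖^2) (Set.Icc R r') := (hφcont.norm).pow 2
  have hqcont : ContinuousOn (fun r => ‖φ' r‖^2) (Set.Icc R r') := (hφ'cont.norm).pow 2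
  have hfint : IntervalIntegrable (fun r => ‖φ r‖^2) volume R r' :=
    hfcont.intervalIntegrable_of_Icc hRr'
  have hwcont : ContinuousOn (fun r => (r-R)^2 * ‖φ' r‖^2) (Set.Icc R r') :=
    (((continuousOn_id.sub continuousOn_const).pow 2).mul hqcont)
  have hwint : IntervalIntegrable (fun r => (r-R)^2 * ‖φ' r‖^2) volume R r' :=
    hwcont.intervalIntegrable_of_Icc hRr'
  have hLHSint : IntervalIntegrable
      (fun r => (1/2)*‖φ r‖^2 - 2*(r-R)^2*‖φ' r‖^2) volume R r' := by
    have : ContinuousOn (fun r => (1/2)*‖φ r‖^2 - 2*(r-R)^2*‖φ' r‖^2) (Set.Icc R r') :=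
      (continuousOn_const.mul hfcont).sub
        ((continuousOn_const.mul ((continuousOn_id.sub continuousOn_const).pow 2)).mul hqcont)
    exact this.intervalIntegrable_of_Icc hRr'
  have hmono : (∫ r in R..r', ((1/2)*‖φ r‖^2 - 2*(r-R)^2*‖φ' r‖^2))
      ≤ ∫ r in R..r', g' r :=
    intervalIntegral.integral_mono_on hRr' hLHSint hg'int hpt
  have hsplit : (∫ r in R..r', ((1/2)*‖φ r‖^2 - 2*(r-R)^2*‖φ' r‖^2))
      = (1/2)*(∫ r in R..r', ‖φ r‖^2) - 2*(∫ r in R..r', (r-R)^2*‖φ' r‖^2) := by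
    simp only [mul_assoc]
    rw [intervalIntegral.integral_sub ((hfint.const_mul (1/2 : ℝ)))
        ((hwint.const_mul (2 : ℝ))),
      intervalIntegral.integral_const_mul, intervalIntegral.integral_const_mul]
  -- second comparison
  have hμcont : ContinuousOn (fun r => (muKerr M a r)^2 * r^2 * ‖φ' r‖^2) (Set.Icc R r') := by
    apply ContinuousOn.mul _ hqcont
    apply ContinuousOn.mul _ (continuousOn_id.pow 2)
    apply ContinuousOn.pow
    apply ContinuousOn.div
    · fun_prop
    · fun_prop
    · intro r hr
      have hr0 : 0 < r := lt_of_lt_of_le hR0 hr.1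
      positivity
  have hμint : IntervalIntegrable (fun r => (muKerr M a r)^2 * r^2 * ‖φ' r‖^2) volume R r' :=
    hμcont.intervalIntegrable_of_Icc hRr'
  have hμint' : IntervalIntegrable (fun r => K * ((muKerr M a r)^2 * r^2 * ‖φ' r‖^2)) volume R r' :=
    hμint.const_mul K
  have hB : (∫ r in R..r', (r-R)^2*‖φ' r‖^2)
      ≤ K * ∫ r in R..r', (muKerr M a r)^2 * r^2 * ‖φ' r‖^2 := by
    rw [← intervalIntegral.integral_const_mul]
    apply intervalIntegral.integral_mono_on hRr' hwint hμint'
    intro r hr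
    have hk := key r hr.1
    have := mul_le_mul_of_nonneg_right hk (sq_nonneg ‖φ' r‖)
    calc (r-R)^2 * ‖φ' r‖^2 ≤ K * ((muKerr M a r)^2 * r^2) * ‖φ' r‖^2 := this
      _ = K * ((muKerr M a r)^2 * r^2 * ‖φ' r‖^2) := by ring
  have hI3 : 0 ≤ ∫ r in R..r', (muKerr M a r)^2 * r^2 * ‖φ' r‖^2 := by
    apply intervalIntegral.integral_nonneg hRr'
    intro r hr
    positivity
  have hX : 0 ≤ (r' - R) * ‖φ r'‖^2 :=
    mul_nonneg (by linarith) (sq_nonneg _)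
  have hA : (1/2)*(∫ r in R..r', ‖φ r‖^2) - 2*(∫ r in R..r', (r-R)^2*‖φ' r‖^2)
      ≤ (r' - R) * ‖φ r'‖^2 := by
    rw [← hsplit]
    calc _ ≤ ∫ r in R..r', g' r := hmono
      _ = g r' - g R := hFTC
      _ = (r' - R) * ‖φ r'‖^2 := by rw [hgR, hgr']; ring
  nlinarith [hA, hB, hI3, hX, hK0.le, mul_nonneg hK0.le hX]
end

section
/- Let α < 0 and let h : [r_0, r_1] → ℝ be C^1 with r_0 > 0 and r_0^α |h(r_0)|^2 ≤ D_0. Then -2 α^{-1} r_1^α |h(r_1)|^2 + ∫_{r_0}^{r_1} r^{α-1} |h(r)|^2 dr ≤ (4/α^2) ∫_{r_0}^{r_1} r^{α+1} |h'(r)|^2 dr - 2 α^{-1} D_0. -/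
open MeasureTheory

/-- One-dimensional Hardy estimate, case `α < 0`: if `r₀^α |h(r₀)|² ≤ D₀`, then
`-2α⁻¹ r₁^α |h(r₁)|² + ∫_{r₀}^{r₁} r^{α-1} |h|² dr ≤ (4/α²) ∫_{r₀}^{r₁} r^{α+1} |h'|² dr - 2α⁻¹ D₀`. -/
theorem hardy_one_dim_neg (α r0 r1 D0 : ℝ) (hα : α < 0) (hr0 : 0 < r0) (hr01 : r0 < r1)
    (h h' : ℝ → ℝ)
    (hderiv : ∀ r ∈ Set.Icc r0 r1, HasDerivAt h (h' r) r)
    (hcont : ContinuousOn h' (Set.Icc r0 r1))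
    (hD0 : r0 ^ α * |h r0|^2 ≤ D0) :
    -2 * α⁻¹ * r1 ^ α * |h r1|^2 + (∫ r in r0..r1, r ^ (α - 1) * |h r|^2)
      ≤ 4 / α^2 * (∫ r in r0..r1, r ^ (α + 1) * |h' r|^2) - 2 * α⁻¹ * D0 := by
  have hα0 : α ≠ 0 := ne_of_lt hα
  have hIcc : Set.uIcc r0 r1 = Set.Icc r0 r1 := Set.uIcc_of_le hr01.le
  have hpos : ∀ r ∈ Set.Icc r0 r1, 0 < r := fun r hr => lt_of_lt_of_le hr0 hr.1
  have hconth : ContinuousOn h (Set.Icc r0 r1) := fun r hr =>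
    (hderiv r hr).continuousAt.continuousWithinAt
  have hrpow : ∀ c : ℝ, ContinuousOn (fun r : ℝ => r ^ c) (Set.Icc r0 r1) := fun c =>
    ContinuousOn.rpow_const continuousOn_id fun r hr => Or.inl (hpos r hr).ne'
  have hc1 : ContinuousOn (fun r : ℝ => r ^ (α - 1) * (h r) ^ 2) (Set.Icc r0 r1) :=
    (hrpow (α - 1)).mul (hconth.pow 2)
  have hc2 : ContinuousOn (fun r : ℝ => r ^ (α + 1) * (h' r) ^ 2) (Set.Icc r0 r1) :=
    (hrpow (α + 1)).mul (hcont.pow 2)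
  have hc3 : ContinuousOn
      (fun r : ℝ => r ^ (α - 1) * (h r) ^ 2 + 2 * α⁻¹ * (r ^ α * (h r * h' r)))
      (Set.Icc r0 r1) :=
    hc1.add (((hrpow α).mul (hconth.mul hcont)).const_smul (2 * α⁻¹))
  -- integration by parts via FTC
  set G : ℝ → ℝ := fun r => α⁻¹ * r ^ α * (h r) ^ 2 with hGdef
  have hGderiv : ∀ r ∈ Set.Icc r0 r1,
      HasDerivAt G (r ^ (α - 1) * (h r) ^ 2 + 2 * α⁻¹ * (r ^ α * (h r * h' r))) r := by
    intro r hr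
    have hr' : r ≠ 0 := (hpos r hr).ne'
    have h1 : HasDerivAt (fun r : ℝ => α⁻¹ * r ^ α) (α⁻¹ * (α * r ^ (α - 1))) r :=
      (Real.hasDerivAt_rpow_const (Or.inl hr')).const_mul _
    have h2 : HasDerivAt (fun r => (h r) ^ 2) (2 * h r * h' r) r := by
      exact (by simpa using (hderiv r hr).pow 2 : HasDerivAt (h ^ 2) (2 * h r * h' r) r)
    have := h1.mul h2
    convert this using 1
    · rfl
    · rfl
    · rfl
    · rw [← mul_assoc α⁻¹ α, inv_mul_cancel₀ hα0, one_mul]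
      ring
  have hFTC : (∫ r in r0..r1,
      (r ^ (α - 1) * (h r) ^ 2 + 2 * α⁻¹ * (r ^ α * (h r * h' r)))) = G r1 - G r0 := by
    apply intervalIntegral.integral_eq_sub_of_hasDerivAt
    · intro r hr; exact hGderiv r (hIcc ▸ hr)
    · exact (hIcc ▸ hc3).intervalIntegrable
  -- pointwise AM-GM bound
  have hpt : ∀ r ∈ Set.Icc r0 r1,
      (1/2) * (r ^ (α - 1) * (h r) ^ 2) - 2 * α⁻¹ ^ 2 * (r ^ (α + 1) * (h' r) ^ 2)
        ≤ r ^ (α - 1) * (h r) ^ 2 + 2 * α⁻¹ * (r ^ α * (h r * h' r)) := by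
    intro r hr
    have hrp : (0:ℝ) < r := hpos r hr
    have hr' : r ≠ 0 := hrp.ne'
    have e1 : r ^ α = r ^ (α - 1) * r := by
      rw [← Real.rpow_add_one hr' (α - 1)]; ring_nf
    have e2 : r ^ (α + 1) = r ^ (α - 1) * r * r := by
      rw [Real.rpow_add_one hr' α, e1]
    have hx : (0:ℝ) < r ^ (α - 1) := Real.rpow_pos_of_pos hrp _
    rw [e1, e2]
    nlinarith [mul_nonneg hx.le (sq_nonneg (h r + 2 * α⁻¹ * r * h' r))]
  -- integrate the pointwise bound
  have hint1 : IntervalIntegrable (fun r : ℝ => r ^ (α - 1) * (h r) ^ 2) volume r0 r1 :=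
    (hIcc ▸ hc1).intervalIntegrable
  have hint2 : IntervalIntegrable (fun r : ℝ => r ^ (α + 1) * (h' r) ^ 2) volume r0 r1 :=
    (hIcc ▸ hc2).intervalIntegrable
  have hmono : (∫ r in r0..r1,
      ((1/2) * (r ^ (α - 1) * (h r) ^ 2) - 2 * α⁻¹ ^ 2 * (r ^ (α + 1) * (h' r) ^ 2)))
      ≤ G r1 - G r0 := by
    rw [← hFTC]
    apply intervalIntegral.integral_mono_on hr01.le
    · exact ((hint1.const_mul (1/2)).sub (hint2.const_mul (2 * α⁻¹ ^ 2)))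
    · exact (hIcc ▸ hc3).intervalIntegrable
    · exact hpt
  have hsplit : (∫ r in r0..r1,
      ((1/2) * (r ^ (α - 1) * (h r) ^ 2) - 2 * α⁻¹ ^ 2 * (r ^ (α + 1) * (h' r) ^ 2)))
      = (1/2) * (∫ r in r0..r1, r ^ (α - 1) * (h r) ^ 2)
        - 2 * α⁻¹ ^ 2 * (∫ r in r0..r1, r ^ (α + 1) * (h' r) ^ 2) := by
    rw [intervalIntegral.integral_sub (hint1.const_mul (1/2)) (hint2.const_mul (2 * α⁻¹ ^ 2)),
      intervalIntegral.integral_const_mul, intervalIntegral.integral_const_mul]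
  rw [hsplit] at hmono
  simp only [sq_abs] at hD0 ⊢
  have hinv : α⁻¹ < 0 := inv_lt_zero.mpr hα
  have hkey : -2 * α⁻¹ * (r0 ^ α * (h r0) ^ 2) ≤ -2 * α⁻¹ * D0 :=
    mul_le_mul_of_nonneg_left hD0 (by linarith)
  have hdiv : 4 / α ^ 2 = 4 * α⁻¹ ^ 2 := by
    field_simp
  rw [hdiv]
  simp only [hGdef] at hmono
  nlinarith [hmono, hkey]
end

section
/- Let α > 0 and let h : [r_0, r_1] → ℝ be C^1 with r_0 > 0 and r_1^α |h(r_1)|^2 ≤ D_0. Then 2 α^{-1} r_0^α |h(r_0)|^2 + ∫_{r_0}^{r_1} r^{α-1} |h(r)|^2 dr ≤ (4/α^2) ∫_{r_0}^{r_1} r^{α+1} |h'(r)|^2 dr + 2 α^{-1} D_0. -/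
open MeasureTheory

/-- One-dimensional Hardy estimate, case `α > 0`: if `r₁^α |h(r₁)|² ≤ D₀`, then
`2α⁻¹ r₀^α |h(r₀)|² + ∫_{r₀}^{r₁} r^{α-1} |h|² dr ≤ (4/α²) ∫_{r₀}^{r₁} r^{α+1} |h'|² dr + 2α⁻¹ D₀`. -/
theorem hardy_one_dim_pos (α r0 r1 D0 : ℝ) (hα : 0 < α) (hr0 : 0 < r0) (hr01 : r0 < r1)
    (h h' : ℝ → ℝ)
    (hderiv : ∀ r ∈ Set.Icc r0 r1, HasDerivAt h (h' r) r)
    (hcont : ContinuousOn h' (Set.Icc r0 r1))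
    (hD0 : r1 ^ α * |h r1|^2 ≤ D0) :
    2 * α⁻¹ * r0 ^ α * |h r0|^2 + (∫ r in r0..r1, r ^ (α - 1) * |h r|^2)
      ≤ 4 / α^2 * (∫ r in r0..r1, r ^ (α + 1) * |h' r|^2) + 2 * α⁻¹ * D0 := by
  simp only [sq_abs] at hD0 ⊢
  have hne : Set.Icc r0 r1 ∈ {s : Set ℝ | True} := trivial
  have hch : ContinuousOn h (Set.Icc r0 r1) := fun r hr =>
    ((hderiv r hr).continuousAt).continuousWithinAt
  set F' : ℝ → ℝ := fun r => α * r ^ (α - 1) * (h r) ^ 2 + r ^ α * (2 * h r * h' r)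
    with hF'def
  have hpos : ∀ r ∈ Set.Icc r0 r1, 0 < r := fun r hr => lt_of_lt_of_le hr0 hr.1
  have hFderiv : ∀ r ∈ Set.uIcc r0 r1,
      HasDerivAt (fun x : ℝ => x ^ α * (h x) ^ 2) (F' r) r := by
    intro r hr
    rw [Set.uIcc_of_le hr01.le] at hr
    have h1 : HasDerivAt (fun x : ℝ => x ^ α) (α * r ^ (α - 1)) r :=
      Real.hasDerivAt_rpow_const (Or.inl (hpos r hr).ne')
    have h2 : HasDerivAt (fun x => (h x) ^ 2) (2 * h r * h' r) r := by
      have := (hderiv r hr).mul (hderiv r hr)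
      rw [show h' r * h r + h r * h' r = 2 * h r * h' r by ring] at this
      exact this.congr_of_eventuallyEq (Filter.Eventually.of_forall fun x => by simp [sq])
    exact h1.mul h2
  -- continuity pieces
  have hc1 : ContinuousOn (fun r : ℝ => r ^ (α - 1)) (Set.Icc r0 r1) :=
    ContinuousOn.rpow_const continuousOn_id (fun r hr => Or.inl (hpos r hr).ne')
  have hc0 : ContinuousOn (fun r : ℝ => r ^ α) (Set.Icc r0 r1) :=
    ContinuousOn.rpow_const continuousOn_id (fun r hr => Or.inl (hpos r hr).ne')
  have hc2 : ContinuousOn (fun r : ℝ => r ^ (α + 1)) (Set.Icc r0 r1) :=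
    ContinuousOn.rpow_const continuousOn_id (fun r hr => Or.inl (hpos r hr).ne')
  have hcF' : ContinuousOn F' (Set.Icc r0 r1) := by
    apply ContinuousOn.add
    · exact ((continuousOn_const.mul hc1).mul (hch.pow 2))
    · exact hc0.mul ((continuousOn_const.mul hch).mul hcont)
  have hintF' : IntervalIntegrable F' volume r0 r1 :=
    (hcF'.intervalIntegrable_of_Icc hr01.le)
  have hI : IntervalIntegrable (fun r : ℝ => r ^ (α - 1) * (h r) ^ 2) volume r0 r1 :=
    ((hc1.mul (hch.pow 2)).intervalIntegrable_of_Icc hr01.le)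
  have hJ : IntervalIntegrable (fun r : ℝ => r ^ (α + 1) * (h' r) ^ 2) volume r0 r1 :=
    ((hc2.mul (hcont.pow 2)).intervalIntegrable_of_Icc hr01.le)
  have hg : IntervalIntegrable
      (fun r : ℝ => α / 2 * (r ^ (α - 1) * (h r) ^ 2) - 2 / α * (r ^ (α + 1) * (h' r) ^ 2))
      volume r0 r1 :=
    (hI.const_mul _).sub (hJ.const_mul _)
  -- FTC
  have hFTC : ∫ r in r0..r1, F' r = r1 ^ α * (h r1) ^ 2 - r0 ^ α * (h r0) ^ 2 :=
    intervalIntegral.integral_eq_sub_of_hasDerivAt hFderiv hintF'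
  -- pointwise bound
  have hpt : ∀ r ∈ Set.Icc r0 r1,
      α / 2 * (r ^ (α - 1) * (h r) ^ 2) - 2 / α * (r ^ (α + 1) * (h' r) ^ 2) ≤ F' r := by
    intro r hr
    have hrpos := hpos r hr
    have hA : (0:ℝ) < r ^ (α - 1) := Real.rpow_pos_of_pos hrpos _
    have hB : (0:ℝ) < r ^ α := Real.rpow_pos_of_pos hrpos _
    have hAC : r ^ (α - 1) * r ^ (α + 1) = (r ^ α) ^ 2 := by
      rw [sq, ← Real.rpow_add hrpos, ← Real.rpow_add hrpos]
      ring_nf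
    have hC : (0:ℝ) < r ^ (α + 1) := Real.rpow_pos_of_pos hrpos _
    simp only [hF'def]
    rw [← mul_le_mul_iff_right₀ hα]
    have expand : α * (α / 2 * (r ^ (α - 1) * h r ^ 2) - 2 / α * (r ^ (α + 1) * h' r ^ 2))
        = α ^ 2 / 2 * (r ^ (α - 1) * h r ^ 2) - 2 * (r ^ (α + 1) * h' r ^ 2) := by
      field_simp
    rw [expand]
    nlinarith [sq_nonneg (α * r ^ (α - 1) * h r + 2 * r ^ α * h' r), hA.le, hB.le, hC.le,
      mul_pos hA hC, sq_nonneg (h r), sq_nonneg (h' r)]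
  have hmono : ∫ r in r0..r1,
      (α / 2 * (r ^ (α - 1) * (h r) ^ 2) - 2 / α * (r ^ (α + 1) * (h' r) ^ 2))
      ≤ ∫ r in r0..r1, F' r :=
    intervalIntegral.integral_mono_on hr01.le hg hintF' hpt
  rw [intervalIntegral.integral_sub (hI.const_mul _) (hJ.const_mul _),
    intervalIntegral.integral_const_mul, intervalIntegral.integral_const_mul, hFTC] at hmono
  set I := ∫ r in r0..r1, r ^ (α - 1) * (h r) ^ 2
  set J := ∫ r in r0..r1, r ^ (α + 1) * (h' r) ^ 2
  have key : α / 2 * I + r0 ^ α * (h r0) ^ 2 ≤ D0 + 2 / α * J := by linarith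
  have hfac : (0:ℝ) ≤ 2 / α := by positivity
  have key2 := mul_le_mul_of_nonneg_left key hfac
  have e1 : 2 / α * (α / 2 * I) = I := by field_simp
  have e2 : 2 / α * (2 / α * J) = 4 / α ^ 2 * J := by field_simp; ring
  have e4 : 2 / α * (r0 ^ α * (h r0) ^ 2) = 2 * α⁻¹ * r0 ^ α * (h r0) ^ 2 := by ring
  have e5 : 2 / α * D0 = 2 * α⁻¹ * D0 := by ring
  rw [mul_add, mul_add, e1, e2, e4, e5] at key2
  linarith
end

section
/- Let r_+ > 0, M > 0, a ∈ ℝ with μ(r) = (r^2 - 2Mr + a^2)/(r^2 + a^2). If φ : [r_+, ∞) → ℂ is C^1 with lim_{r→∞} r |φ(r)|^2 = 0 and the integral ∫_{r_+}^{∞} μ^2 r^2 |φ'|^2 dr is finite, then ∫_{r_+}^{∞} |φ|^2 dr ≤ C ∫_{r_+}^{∞} μ^2 r^2 |φ'|^2 dr for a constant C depending only on M and a. -/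
open MeasureTheory

lemma sq_norm_hasDerivAt {φ : ℝ → ℂ} {v : ℂ} {r : ℝ} (h : HasDerivAt φ v r) :
    HasDerivAt (fun t => ‖φ t‖^2) (2 * (((starRingEnd ℂ) (φ r)) * v).re) r := by
  have hre : HasDerivAt (fun t => (φ t).re) v.re r := by
    have := Complex.reCLM.hasFDerivAt.comp_hasDerivAt r h
    exact this
  have him : HasDerivAt (fun t => (φ t).im) v.im r := by
    have := Complex.imCLM.hasFDerivAt.comp_hasDerivAt r h
    exact this
  have heq : (fun t => ‖φ t‖^2) = fun t => (φ t).re*(φ t).re + (φ t).im*(φ t).im := by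
    funext t
    rw [← Complex.normSq_apply, Complex.sq_norm]
  rw [heq]
  exact ((hre.mul hre).add (him.mul him)).congr_deriv (by
    simp [Complex.mul_re]
    ring)

/-- The key pointwise bound: for `r ≥ r_+`, `r - r_+ ≤ (4M/√(M²-a²)) · μ(r) · r`. -/
lemma hardy_pointwise (M a : ℝ) (hM : 0 < M) (ha : |a| < M) {r : ℝ} (hr : rplus M a ≤ r) :
    r - rplus M a ≤ (4*M/Real.sqrt (M^2-a^2)) * (muKerr M a r * r) := by
  set s := Real.sqrt (M^2 - a^2) with hs
  have ha2 : a^2 < M^2 := by nlinarith [sq_abs a, abs_nonneg a]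
  have hs0 : 0 < s := Real.sqrt_pos.mpr (by linarith)
  have hs2 : s^2 = M^2 - a^2 := Real.sq_sqrt (by linarith)
  have hsM : s ≤ M := by nlinarith
  have hp' : rplus M a = M + s := rfl
  have hrpos : 0 < r := by rw [hp'] at hr; linarith
  have hB : 0 < r^2 + a^2 := by positivity
  have hmu : muKerr M a r * r = ((r^2 - 2*M*r + a^2)*r) / (r^2 + a^2) := by
    rw [muKerr, div_mul_eq_mul_div]
  rw [hmu, hp']
  rw [div_mul_div_comm, le_div_iff₀ (by positivity)]
  have h1 : a^2 ≤ r^2 := by nlinarith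
  have h3 : s*r ≤ 2*M*(r - M + s) := by nlinarith
  have h5 : s*(r^2+a^2) ≤ 4*M*(r - M + s)*r := by nlinarith
  have hu : 0 ≤ r - (M+s) := by linarith
  have h6 : (r-(M+s))*(s*(r^2+a^2)) ≤ (r-(M+s))*(4*M*(r - M + s)*r) :=
    mul_le_mul_of_nonneg_left h5 hu
  have h7 : 4*M*((r^2 - 2*M*r + a^2)*r) = (r-(M+s))*(4*M*(r - M + s)*r) := by
    linear_combination (4*M*r)*hs2
  rw [h7]
  linarith [h6]

lemma hardy_pointwise_sq (M a : ℝ) (hM : 0 < M) (ha : |a| < M) {r : ℝ} (hr : rplus M a ≤ r) :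
    (r - rplus M a)^2 ≤ (4*M/Real.sqrt (M^2-a^2))^2 * ((muKerr M a r)^2 * r^2) := by
  have h := hardy_pointwise M a hM ha hr
  have hu : 0 ≤ r - rplus M a := by linarith
  have h2 := pow_le_pow_left₀ hu h 2
  calc (r - rplus M a)^2 ≤ ((4*M/Real.sqrt (M^2-a^2)) * (muKerr M a r * r))^2 := h2
    _ = (4*M/Real.sqrt (M^2-a^2))^2 * ((muKerr M a r)^2 * r^2) := by ring

/-- Simple Hardy inequality on the half-line: if `r|φ(r)|² → 0` as `r → ∞` and the
right-hand integral is finite, then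
`∫_{r_+}^{∞} |φ|² dr ≤ C ∫_{r_+}^{∞} μ² r² |φ'|² dr` with `C = C(M,a)`. -/
theorem hardy_trivial_halfline (M a : ℝ) (hM : 0 < M) (ha : |a| < M) :
    ∃ C > 0, ∀ (φ φ' : ℝ → ℂ),
      (∀ r, rplus M a ≤ r → HasDerivAt φ (φ' r) r) →
      ContinuousOn φ' (Set.Ici (rplus M a)) →
      Filter.Tendsto (fun r => r * ‖φ r‖^2) Filter.atTop (nhds 0) →
      IntegrableOn (fun r => (muKerr M a r)^2 * r^2 * ‖φ' r‖^2) (Set.Ioi (rplus M a)) →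
      (∫ r in Set.Ioi (rplus M a), ‖φ r‖^2)
        ≤ C * ∫ r in Set.Ioi (rplus M a), (muKerr M a r)^2 * r^2 * ‖φ' r‖^2 := by
  have ha2 : a^2 < M^2 := by nlinarith [sq_abs a, abs_nonneg a]
  have hs0 : 0 < Real.sqrt (M^2 - a^2) := Real.sqrt_pos.mpr (by linarith)
  set p := rplus M a with hp
  have hppos : 0 < p := by
    have := Real.sqrt_nonneg (M^2 - a^2)
    rw [hp, rplus]; linarith
  set C0 : ℝ := 4*M/Real.sqrt (M^2-a^2) with hC0def
  have hC0 : 0 < C0 := by positivity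
  refine ⟨4*C0^2, by positivity, ?_⟩
  intro φ φ' hd hc hlim hint
  set g : ℝ → ℝ := fun r => (muKerr M a r)^2 * r^2 * ‖φ' r‖^2 with hg
  set J : ℝ := ∫ r in Set.Ioi p, g r with hJ
  have hgnon : ∀ r, 0 ≤ g r := fun r => by positivity
  have hJnon : 0 ≤ J :=
    setIntegral_nonneg measurableSet_Ioi (fun r _ => hgnon r)
  have hφcont : ContinuousOn φ (Set.Ici p) :=
    fun r hr => (hd r hr).continuousAt.continuousWithinAt
  -- continuity of g on [p, ∞)
  have hmucont : ContinuousOn (fun r => muKerr M a r) (Set.Ici p) := by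
    apply ContinuousOn.div (by fun_prop) (by fun_prop)
    intro x hx
    have hx0 : 0 < x := lt_of_lt_of_le hppos hx
    have : 0 < x^2 + a^2 := by positivity
    exact ne_of_gt this
  have hgc : ContinuousOn g (Set.Ici p) := by
    exact ((hmucont.pow 2).mul (by fun_prop)).mul ((hc.norm).pow 2)
  set D : ℝ → ℝ := fun r => 2 * (((starRingEnd ℂ) (φ r)) * φ' r).re with hD
  -- main estimate on finite intervals
  have main : ∀ R, p ≤ R →
      ∫ r in p..R, ‖φ r‖^2 ≤ 2*((R-p)*‖φ R‖^2) + (4*C0^2)*J := by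
    intro R hR
    have hIcc : Set.Icc p R ⊆ Set.Ici p := Set.Icc_subset_Ici_self
    have huIcc : Set.uIcc p R = Set.Icc p R := Set.uIcc_of_le hR
    have hφc : ContinuousOn φ (Set.Icc p R) := hφcont.mono hIcc
    have hφ'c : ContinuousOn φ' (Set.Icc p R) := hc.mono hIcc
    have hDc : ContinuousOn D (Set.Icc p R) := by
      apply ContinuousOn.mul continuousOn_const
      exact Complex.continuous_re.comp_continuousOn
        (((Complex.continuous_conj.comp_continuousOn hφc)).mul hφ'c)
    have hnc : ContinuousOn (fun r => ‖φ r‖^2) (Set.Icc p R) := (hφc.norm).pow 2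
    have hint1 : IntervalIntegrable (fun r => ‖φ r‖^2) volume p R := by
      apply ContinuousOn.intervalIntegrable; rwa [huIcc]
    have hint2 : IntervalIntegrable (fun r => (r - p) * D r) volume p R := by
      apply ContinuousOn.intervalIntegrable; rw [huIcc]
      exact (continuousOn_id.sub continuousOn_const).mul hDc
    have hintg : IntervalIntegrable g volume p R := by
      apply ContinuousOn.intervalIntegrable; rw [huIcc]
      exact hgc.mono hIcc
    have hftc : ∫ r in p..R, (‖φ r‖^2 + (r - p) * D r)
        = (R - p)*‖φ R‖^2 - (p - p)*‖φ p‖^2 := by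
      apply intervalIntegral.integral_eq_sub_of_hasDerivAt
      · intro r hr
        rw [huIcc] at hr
        have h1 : HasDerivAt (fun t => t - p) 1 r := (hasDerivAt_id r).sub_const p
        have h2 := sq_norm_hasDerivAt (hd r (hIcc hr))
        have h3 := h1.mul h2
        exact h3.congr_deriv (by
        simp only [hD]
        ring)
      · apply ContinuousOn.intervalIntegrable; rw [huIcc]
        exact hnc.add ((continuousOn_id.sub continuousOn_const).mul hDc)
    rw [intervalIntegral.integral_add hint1 hint2] at hftc
    -- pointwise bound on the error term
    have hle : ∀ r ∈ Set.Icc p R, -((r - p) * D r) ≤ (1/2)*‖φ r‖^2 + 2*C0^2*g r := by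
      intro r hr
      have hu : (0:ℝ) ≤ r - p := by linarith [hr.1]
      have hDb : |D r| ≤ 2*‖φ r‖*‖φ' r‖ := by
        simp only [hD]
        calc |2 * (((starRingEnd ℂ) (φ r)) * φ' r).re|
            = 2 * |(((starRingEnd ℂ) (φ r)) * φ' r).re| := by rw [abs_mul]; norm_num
          _ ≤ 2 * ‖((starRingEnd ℂ) (φ r)) * φ' r‖ := by
              have := Complex.abs_re_le_norm (((starRingEnd ℂ) (φ r)) * φ' r)
              linarith
          _ = 2*‖φ r‖*‖φ' r‖ := by rw [norm_mul, RCLike.norm_conj]; ring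
      have h1 : -((r - p) * D r) ≤ (r - p) * |D r| := by
        rw [neg_mul_eq_mul_neg]
        exact mul_le_mul_of_nonneg_left (neg_le_abs _) hu
      have h2 : (r - p) * |D r| ≤ (r - p) * (2*‖φ r‖*‖φ' r‖) :=
        mul_le_mul_of_nonneg_left hDb hu
      have h3 : (r - p) * (2*‖φ r‖*‖φ' r‖)
          ≤ (1/2)*‖φ r‖^2 + 2*((r-p)^2*‖φ' r‖^2) := by
        nlinarith [sq_nonneg (‖φ r‖ - 2*(r-p)*‖φ' r‖)]
      have h4 : (r-p)^2*‖φ' r‖^2 ≤ C0^2*((muKerr M a r)^2*r^2)*‖φ' r‖^2 := by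
        have := hardy_pointwise_sq M a hM ha hr.1
        exact mul_le_mul_of_nonneg_right this (sq_nonneg _)
      have h5 : C0^2*((muKerr M a r)^2*r^2)*‖φ' r‖^2 = C0^2 * g r := by
        simp only [hg]; ring
      linarith
    have hintneg : IntervalIntegrable (fun r => -((r - p) * D r)) volume p R := hint2.neg
    have hintbnd : IntervalIntegrable (fun r => (1/2)*‖φ r‖^2 + 2*C0^2*g r) volume p R :=
      (hint1.const_mul (1/2)).add (hintg.const_mul (2*C0^2))
    have hmono : ∫ r in p..R, -((r - p) * D r)
        ≤ ∫ r in p..R, ((1/2)*‖φ r‖^2 + 2*C0^2*g r) :=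
      intervalIntegral.integral_mono_on hR hintneg hintbnd hle
    have hsplit : ∫ r in p..R, ((1/2)*‖φ r‖^2 + 2*C0^2*g r)
        = (1/2) * (∫ r in p..R, ‖φ r‖^2) + 2*C0^2 * (∫ r in p..R, g r) := by
      rw [intervalIntegral.integral_add (hint1.const_mul (1/2)) (hintg.const_mul (2*C0^2)),
        intervalIntegral.integral_const_mul, intervalIntegral.integral_const_mul]
    have hgJ : ∫ r in p..R, g r ≤ J := by
      rw [intervalIntegral.integral_of_le hR, hJ]
      apply setIntegral_mono_set hint
      · exact Filter.Eventually.of_forall (fun r => hgnon r)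
      · exact HasSubset.Subset.eventuallyLE Set.Ioc_subset_Ioi_self
    have hneg : ∫ r in p..R, -((r - p) * D r) = -∫ r in p..R, (r - p) * D r :=
      intervalIntegral.integral_neg
    have hC02 : (0:ℝ) ≤ 2*C0^2 := by positivity
    nlinarith [mul_le_mul_of_nonneg_left hgJ hC02]
  -- boundary term tends to zero
  have hsq : Filter.Tendsto (fun R => ‖φ R‖^2) Filter.atTop (nhds 0) := by
    apply squeeze_zero' (Filter.Eventually.of_forall fun R => by positivity) ?_ hlim
    filter_upwards [Filter.eventually_ge_atTop (1:ℝ)] with R hR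
    nlinarith [sq_nonneg ‖φ R‖]
  have hF0 : Filter.Tendsto (fun R => (R-p)*‖φ R‖^2) Filter.atTop (nhds 0) := by
    have h := hlim.sub (hsq.const_mul p)
    have h0 : (0:ℝ) - p*0 = 0 := by ring
    rw [h0] at h
    exact h.congr fun R => by ring
  -- integrability of ‖φ‖² on (p, ∞)
  have hfint : ∀ R : ℝ, IntegrableOn (fun r => ‖φ r‖^2) (Set.Ioc p R) := by
    intro R
    rcases le_or_gt R p with h | h
    · rw [Set.Ioc_eq_empty (by exact not_lt.mpr h)]
      exact integrableOn_empty
    · have : ContinuousOn (fun r => ‖φ r‖^2) (Set.Icc p R) :=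
        ((hφcont.mono Set.Icc_subset_Ici_self).norm).pow 2
      exact (this.integrableOn_Icc).mono_set Set.Ioc_subset_Icc_self
  have hIoi : IntegrableOn (fun r => ‖φ r‖^2) (Set.Ioi p) := by
    apply integrableOn_Ioi_of_intervalIntegral_norm_bounded (1 + (4*C0^2)*J) p hfint
      Filter.tendsto_id
    filter_upwards [hF0.eventually_le_const (by norm_num : (0:ℝ) < 1/2),
      Filter.eventually_ge_atTop p] with R hR1 hR2
    have h := main R hR2
    have heq : ∫ x in p..R, ‖(fun r => ‖φ r‖^2) x‖ = ∫ r in p..R, ‖φ r‖^2 := by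
      apply intervalIntegral.integral_congr
      intro x _
      simp [abs_of_nonneg (sq_nonneg ‖φ x‖)]
    rw [heq]
    linarith
  -- pass to the limit
  have hlim1 : Filter.Tendsto (fun R => ∫ r in p..R, ‖φ r‖^2) Filter.atTop
      (nhds (∫ r in Set.Ioi p, ‖φ r‖^2)) :=
    intervalIntegral_tendsto_integral_Ioi p hIoi Filter.tendsto_id
  have hlim2 : Filter.Tendsto (fun R => 2*((R-p)*‖φ R‖^2) + (4*C0^2)*J) Filter.atTop
      (nhds (2*0 + (4*C0^2)*J)) :=
    (hF0.const_mul 2).add tendsto_const_nhds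
  have hfinal := le_of_tendsto_of_tendsto hlim1 hlim2
    (Filter.eventually_atTop.mpr ⟨p, fun R hR => main R hR⟩)
  calc (∫ r in Set.Ioi p, ‖φ r‖^2) ≤ 2*0 + (4*C0^2)*J := hfinal
    _ = (4*C0^2) * J := by ring
end
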